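/- Let R be a commutative ring, d ≥ 1, and let X, Y ∈ Mat_d(R). Let Z = fromBlocks 0 X Y 0 be the (2d)×(2d) matrix with zero diagonal blocks and off-diagonal blocks X and Y. Then the characteristic polynomial of Z equals the characteristic polynomial of X·Y composed with the square of the polynomial variable: charpoly(Z) = (charpoly(X·Y)).comp(t²). Equivalently, det(t·1₂d − Z) = det(t²·1_d − X·Y) as polynomials in t. -/

import Mathlib

open Matrix Polynomial

/-- The characteristic polynomial of `Z = fromBlocks 0 X Y 0` equals the
characteristic polynomial of `X * Y` evaluated at the square of the variable:
`χ_Z(t) = χ_{XY}(t²)`. -/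
theorem stmt_6 {R : Type*} [CommRing R] {d : ℕ} (hd : 1 ≤ d)
    (X Y : Matrix (Fin d) (Fin d) R) :
    (fromBlocks 0 X Y 0 : Matrix (Fin d ⊕ Fin d) (Fin d ⊕ Fin d) R).charpoly =
      (X * Y).charpoly.comp (Polynomial.X ^ 2) := by
  classical
  set X' : Matrix (Fin d) (Fin d) R[X] := X.map C with hX'
  set Y' : Matrix (Fin d) (Fin d) R[X] := Y.map C with hY'
  set T : Matrix (Fin d) (Fin d) R[X] := (Polynomial.X : R[X]) • 1 with hT
  have hcm : charmatrix (fromBlocks (0 : Matrix (Fin d) (Fin d) R) X Y 0)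
      = fromBlocks T (-X') (-Y') T := by
    rw [charmatrix_fromBlocks]
    simp [charmatrix, hT, hX', hY', Matrix.smul_one_eq_diagonal]
  have hXY : X' * Y' = (X * Y).map (C : R →+* R[X]) := (Matrix.map_mul).symm
  have hrhs : (X * Y).charpoly.comp (Polynomial.X ^ 2)
      = det (((Polynomial.X : R[X]) ^ 2) • 1 - X' * Y') := by
    have h1 : (X * Y).charpoly.comp (Polynomial.X ^ 2)
        = (Polynomial.eval₂RingHom Polynomial.C ((Polynomial.X : R[X]) ^ 2))
            (X * Y).charpoly := rfl
    rw [h1, Matrix.charpoly, RingHom.map_det, hXY]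
    congr 1
    refine Matrix.ext fun i j => ?_
    simp only [RingHom.mapMatrix_apply, Matrix.map_apply, charmatrix_apply,
      Matrix.sub_apply, Matrix.smul_apply, Matrix.one_apply, diagonal_apply, apply_ite,
      coe_eval₂RingHom, eval₂_sub, eval₂_X, eval₂_C, eval₂_zero, smul_eq_mul]
    by_cases h : i = j <;> simp [h]
  have key : fromBlocks T (-X') (-Y') T * fromBlocks T 0 Y' 1
      = fromBlocks (((Polynomial.X : R[X]) ^ 2) • 1 - X' * Y') (-X') 0 T := by
    rw [fromBlocks_multiply]
    congr 1 <;>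
      simp [hT, Matrix.smul_mul, Matrix.mul_smul, smul_smul, sq, sub_eq_add_neg, neg_mul]
  have hdetT : det T = (Polynomial.X : R[X]) ^ d := by
    simp [hT, Matrix.smul_one_eq_diagonal]
  have hdets := congrArg Matrix.det key
  rw [det_mul, det_fromBlocks_zero₁₂, det_fromBlocks_zero₂₁, hdetT, det_one, mul_one] at hdets
  have hreg : IsRightRegular ((Polynomial.X : R[X]) ^ d) := (isRegular_X_pow d).right
  have hfin := hreg hdets
  rw [Matrix.charpoly, hcm, hfin]
  exact hrhs.symm
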